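/- Let T be a homeomorphism of a compact metric space X. If (X,T) is minimal, then for every ε > 0 there exists a finite set N ⊆ X such that T^n(N) is an ε-network in X for every n ∈ ℤ. -/
import Mathlib


open Metric Filter Set Topology
open scoped Classical

variable {X : Type*}

/-- A set of naturals is syndetic: bounded gaps. -/
def Syndetic (S : Set ℕ) : Prop := ∃ n : ℕ, ∀ m : ℕ, ∃ k ∈ S, m ≤ k ∧ k ≤ m + n

/-- Forward orbit of a point. -/
def fwdOrbit (T : X → X) (y : X) : Set X := Set.range fun k : ℕ => T^[k] y

/-- A point is minimal (almost periodic): its forward orbit closure is a minimal set. -/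
def IsMinimalPt [TopologicalSpace X] (T : X → X) (y : X) : Prop :=
  ∀ z ∈ closure (fwdOrbit T y), closure (fwdOrbit T z) = closure (fwdOrbit T y)

/-- ℤ-iteration of a homeomorphism. -/
noncomputable def zIter [TopologicalSpace X] (T : X ≃ₜ X) (n : ℤ) : X → X :=
  if 0 ≤ n then (⇑T)^[n.toNat] else (⇑T.symm)^[(-n).toNat]

/-- `A` is an `ε`-network: every point of the space is within `ε` of `A`. -/
def IsNet [PseudoMetricSpace X] (ε : ℝ) (A : Set X) : Prop :=
  ∀ x : X, ∃ a ∈ A, dist x a ≤ ε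

/-- A point is nonwandering (w.r.t. forward iterates). -/
def NonWandering [TopologicalSpace X] (T : X → X) (x : X) : Prop :=
  ∀ U : Set X, IsOpen U → x ∈ U → ∃ k : ℕ, 1 ≤ k ∧ ((fun p => T^[k] p) '' U ∩ U).Nonempty

/-- One-sided `d`-pseudotrajectory. -/
def IsPseudoTraj [PseudoMetricSpace X] (T : X → X) (d : ℝ) (x : ℕ → X) : Prop :=
  ∀ k : ℕ, dist (x (k + 1)) (T (x k)) ≤ d

/-- Two-sided `d`-pseudotrajectory. -/
def IsPseudoTrajZ [PseudoMetricSpace X] (T : X → X) (d : ℝ) (x : ℤ → X) : Prop :=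
  ∀ k : ℤ, dist (x (k + 1)) (T (x k)) ≤ d

/-- A chain recurrent point. -/
def ChainRec [PseudoMetricSpace X] (T : X → X) (x : X) : Prop :=
  ∀ d > (0 : ℝ), ∃ n : ℕ, 1 ≤ n ∧ ∃ c : ℕ → X, c 0 = x ∧ c n = x ∧
    ∀ k < n, dist (c (k + 1)) (T (c k)) ≤ d

/-- ω-limit set of a point under a map. -/
def omegaSet [TopologicalSpace X] (T : X → X) (y : X) : Set X :=
  {p | ∃ φ : ℕ → ℕ, StrictMono φ ∧ Tendsto (fun n => T^[φ n] y) atTop (nhds p)}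

/-- The set of recurrent points (`x ∈ ω(x)`). -/
def RecurrentPts [TopologicalSpace X] (T : X → X) : Set X := {x | x ∈ omegaSet T x}

/-- The multishadowing property (for homeomorphisms, two-sided). -/
def Multishadowing [PseudoMetricSpace X] (T : X ≃ₜ X) : Prop :=
  ∀ ε > (0 : ℝ), ∃ d > (0 : ℝ), ∀ x : ℤ → X, IsPseudoTrajZ (⇑T) d x →
    ∃ Y : Finset X, ∀ k : ℤ, ∃ y ∈ Y, dist (x k) (zIter T k y) < ε

/-- Topological support of a measure: points all of whose open neighborhoods
have positive measure. -/
def msupp [TopologicalSpace X] [MeasurableSpace X] (μ : MeasureTheory.Measure X) : Set X :=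
  {x | ∀ U : Set X, IsOpen U → x ∈ U → 0 < μ U}

/-- Counting function for density computations. -/
noncomputable def cnt (K : Set ℕ) (N : ℕ) : ℝ :=
  ((Finset.range (N + 1)).filter (· ∈ K)).card



lemma uniform_dense_aux [MetricSpace X] [CompactSpace X] (T : X ≃ₜ X)
    (hmin : ∀ x : X, Dense (fwdOrbit (⇑T) x)) (ε : ℝ) (hε : 0 < ε) :
    ∃ K : ℕ, ∀ y x : X, ∃ k ≤ K, dist x ((⇑T)^[k] y) ≤ ε := by
  obtain ⟨C, hC⟩ := (isCompact_univ (X := X)).elim_finite_subcover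
    (fun c : X => Metric.ball c (ε/2)) (fun c => Metric.isOpen_ball)
    (fun x _ => Set.mem_iUnion.2 ⟨x, Metric.mem_ball_self (by linarith)⟩)
  have hc : ∀ c : X, ∃ Kc : ℕ, ∀ y : X, ∃ k ≤ Kc,
      (⇑T)^[k] y ∈ Metric.ball c (ε/2) := by
    intro c
    have cover : (Set.univ : Set X) ⊆
        ⋃ k : ℕ, (fun y => (⇑T)^[k] y) ⁻¹' Metric.ball c (ε/2) := by
      intro y _
      have hb : (Metric.ball c (ε/2) ∩ fwdOrbit (⇑T) y).Nonempty :=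
        (hmin y).inter_open_nonempty _ Metric.isOpen_ball
          ⟨c, Metric.mem_ball_self (by linarith)⟩
      obtain ⟨z, hz, k, rfl⟩ := hb
      exact Set.mem_iUnion.2 ⟨k, hz⟩
    obtain ⟨s, hs⟩ := (isCompact_univ (X := X)).elim_finite_subcover _
      (fun k : ℕ => Metric.isOpen_ball.preimage (T.continuous.iterate k)) cover
    refine ⟨s.sup id, fun y => ?_⟩
    obtain ⟨k, hk, hky⟩ := Set.mem_iUnion₂.1 (hs (Set.mem_univ y))
    exact ⟨k, Finset.le_sup (f := id) hk, hky⟩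
  choose Kf hKf using hc
  refine ⟨C.sup Kf, fun y x => ?_⟩
  obtain ⟨c, hcC, hxc⟩ := Set.mem_iUnion₂.1 (hC (Set.mem_univ x))
  obtain ⟨k, hk, hky⟩ := hKf c y
  refine ⟨k, le_trans hk (Finset.le_sup hcC), ?_⟩
  calc dist x ((⇑T)^[k] y) ≤ dist x c + dist c ((⇑T)^[k] y) := dist_triangle _ _ _
    _ ≤ ε/2 + ε/2 := by
        have h1 := Metric.mem_ball.1 hxc
        have h2 := Metric.mem_ball.1 hky
        rw [dist_comm] at h2
        exact add_le_add h1.le h2.le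
    _ = ε := by ring

lemma zIter_iterate_comm_aux [TopologicalSpace X] (T : X ≃ₜ X) (n : ℤ) (k : ℕ) (x : X) :
    zIter T n ((⇑T)^[k] x) = (⇑T)^[k] (zIter T n x) := by
  unfold zIter
  split
  · rw [← Function.iterate_add_apply, ← Function.iterate_add_apply, Nat.add_comm]
  · have h : Function.Commute ⇑T.symm ⇑T := fun y => by simp
    exact (h.iterate_left _).iterate_right k x

theorem stmt4 [MetricSpace X] [CompactSpace X] (T : X ≃ₜ X)
    (hmin : ∀ x : X, Dense (fwdOrbit (⇑T) x)) :
    ∀ ε > (0 : ℝ), ∃ N : Finset X, ∀ n : ℤ, IsNet ε (zIter T n '' (N : Set X)) := by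
  intro ε hε
  rcases isEmpty_or_nonempty X with hX | hX
  · exact ⟨∅, fun n x => (IsEmpty.false x).elim⟩
  obtain ⟨x₀⟩ := hX
  obtain ⟨K, hK⟩ := uniform_dense_aux T hmin ε hε
  refine ⟨(Finset.range (K+1)).image (fun k => (⇑T)^[k] x₀), fun n x => ?_⟩
  obtain ⟨k, hk, hky⟩ := hK (zIter T n x₀) x
  refine ⟨(⇑T)^[k] (zIter T n x₀), ⟨(⇑T)^[k] x₀, ?_, zIter_iterate_comm_aux T n k x₀⟩, hky⟩
  exact Finset.mem_coe.2 (Finset.mem_image.2 ⟨k, Finset.mem_range.2 (by omega), rfl⟩)
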